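/- Let Λ be a finite nonempty type, d ≥ 1, B : Λ → Λ → Matrix (Fin d) (Fin d) ℂ, and ρ : Λ → Matrix (Fin d) (Fin d) ℂ with each ρ_j positive semidefinite and Tr(ρ_j) a positive real. Set M_j^i := B_j^i ⊗ₖ E_{ij} and φ_{jj'}(b) := ((Tr ρ_j)^{1/2} (Tr ρ_{j'})^{1/2})⁻¹ · Tr(((ρ_j^{1/2} * ρ_{j'}^{1/2}) ⊗ₖ E_{j' j}) * b). Then for every k ≥ 1 and every a ∈ Matrix (Fin d × Λ) (Fin d × Λ) ℂ, the forward Markov operator satisfies: ∑_{i,j,j'∈Λ} (φ_{jj'}(1))^k • ((M_j^i)ᴴ * a * M_{j'}^i) = ∑_{i,j∈Λ} (M_j^i)ᴴ * a * M_j^i. -/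

import Mathlib

open Matrix Kronecker
open scoped ComplexOrder

/-- The old Mathlib `Matrix.PosSemidef.sqrt` (removed upstream), restored with its old definition. -/
noncomputable def Matrix.PosSemidef.sqrt {n : Type*} [Fintype n] [DecidableEq n] {𝕜 : Type*} [RCLike 𝕜]
    {A : Matrix n n 𝕜} (hA : A.PosSemidef) : Matrix n n 𝕜 :=
  hA.1.eigenvectorUnitary.1 * diagonal ((↑) ∘ Real.sqrt ∘ hA.1.eigenvalues) *
    (star hA.1.eigenvectorUnitary : Matrix n n 𝕜)

/-- The functional `φ_{jj'}(b) = ((Tr ρ_j)^{1/2}(Tr ρ_{j'})^{1/2})⁻¹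
Tr((ρ_j^{1/2} ρ_{j'}^{1/2} ⊗ₖ E_{j'j}) b)`. -/
noncomputable def phiJJ {Λ : Type*} [Fintype Λ] [DecidableEq Λ] {d : ℕ}
    (ρ : Λ → Matrix (Fin d) (Fin d) ℂ) (hρ : ∀ j, (ρ j).PosSemidef) (j j' : Λ)
    (b : Matrix (Fin d × Λ) (Fin d × Λ) ℂ) : ℂ :=
  ((Real.sqrt (ρ j).trace.re * Real.sqrt (ρ j').trace.re : ℝ) : ℂ)⁻¹ *
    ((((hρ j).sqrt * (hρ j').sqrt) ⊗ₖ Matrix.single j' j (1 : ℂ)) * b).trace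

/-- The dilated operator `M_j^i = B_j^i ⊗ₖ E_{ij}`. -/
noncomputable def Mop {Λ : Type*} [Fintype Λ] [DecidableEq Λ] {d : ℕ}
    (B : Λ → Λ → Matrix (Fin d) (Fin d) ℂ) (j i : Λ) :
    Matrix (Fin d × Λ) (Fin d × Λ) ℂ :=
  B j i ⊗ₖ Matrix.single i j (1 : ℂ)

/-- the forward Markov operator of the transition expectation satisfies
`T(a) = ∑ i j, (M_j^i)ᴴ a M_j^i`:
`∑ i j j', (φ_{jj'}(1))^k • ((M_j^i)ᴴ a M_{j'}^i) = ∑ i j, (M_j^i)ᴴ a M_j^i`. -/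
theorem stmt_10 {Λ : Type*} [Fintype Λ] [DecidableEq Λ] [Nonempty Λ] {d : ℕ} (hd : 1 ≤ d)
    (B : Λ → Λ → Matrix (Fin d) (Fin d) ℂ)
    (ρ : Λ → Matrix (Fin d) (Fin d) ℂ) (hρ : ∀ j, (ρ j).PosSemidef)
    (hTr : ∀ j, 0 < (ρ j).trace) (k : ℕ) (hk : 1 ≤ k)
    (a : Matrix (Fin d × Λ) (Fin d × Λ) ℂ) :
    ∑ i : Λ, ∑ j : Λ, ∑ j' : Λ,
        (phiJJ ρ hρ j j' 1) ^ k • ((Mop B j i)ᴴ * a * Mop B j' i) =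
      ∑ i : Λ, ∑ j : Λ, (Mop B j i)ᴴ * a * Mop B j i := by

  have hre : ∀ j, (ρ j).trace = ((ρ j).trace.re : ℂ) := by
    intro j
    have := hTr j
    rw [Complex.lt_def] at this
    exact (Complex.re_add_im _).symm.trans (by rw [← this.2]; simp)
  have hrepos : ∀ j, 0 < (ρ j).trace.re := fun j => ((Complex.lt_def).mp (hTr j)).1
  have hphi : ∀ j j', phiJJ ρ hρ j j' (1 : Matrix (Fin d × Λ) (Fin d × Λ) ℂ) =
      if j' = j then 1 else 0 := by
    intro j j'
    rw [phiJJ, mul_one, trace_kronecker]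
    split_ifs with h
    · subst h
      have hsq : ∀ (A : Matrix (Fin d) (Fin d) ℂ) (hA : A.PosSemidef), hA.sqrt * hA.sqrt = A := by
        intro A hA
        unfold Matrix.PosSemidef.sqrt
        conv_rhs => rw [hA.1.spectral_theorem, Unitary.conjStarAlgAut_apply]
        have hU : (star hA.1.eigenvectorUnitary : Matrix (Fin d) (Fin d) ℂ) * hA.1.eigenvectorUnitary.1 = 1 :=
          Unitary.coe_star_mul_self _
        have hD : diagonal ((RCLike.ofReal : ℝ → ℂ) ∘ Real.sqrt ∘ hA.1.eigenvalues) * diagonal ((RCLike.ofReal : ℝ → ℂ) ∘ Real.sqrt ∘ hA.1.eigenvalues)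
            = diagonal (RCLike.ofReal ∘ hA.1.eigenvalues : Fin d → ℂ) := by
          rw [diagonal_mul_diagonal]
          congr 1; funext i
          simp only [Function.comp_apply]
          rw [← RCLike.ofReal_mul, Real.mul_self_sqrt (hA.eigenvalues_nonneg i)]
        simp only [Matrix.mul_assoc]
        rw [← Matrix.mul_assoc _ hA.1.eigenvectorUnitary.1, hU, Matrix.one_mul, ← Matrix.mul_assoc (diagonal _), hD]
      rw [Matrix.trace_single_eq_same, hsq _ (hρ j'), mul_one,
        Real.mul_self_sqrt (hrepos j').le, ← hre]
      exact inv_mul_cancel₀ (hTr j').ne'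
    · rw [Matrix.trace_single_eq_of_ne _ _ _ h]
      simp
  refine Finset.sum_congr rfl fun i _ => Finset.sum_congr rfl fun j _ => ?_
  rw [Finset.sum_eq_single j]
  · rw [hphi, if_pos rfl, one_pow, one_smul]
  · intro j' _ hne
    rw [hphi, if_neg hne, zero_pow (by omega), zero_smul]
  · intro h
    exact absurd (Finset.mem_univ j) h
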